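/- Let ϑ ∈ I and let ζ be the unique fluid model solution with initial measure ϑ. Then for each 1 ≤ k ≤ K, the map t ↦ ζ_k(t) is continuous from [0,∞) into the space of finite Borel measures on [0,∞)² equipped with the topology of weak convergence (equivalently, the Prohorov metric). -/

import Mathlib

open MeasureTheory Set Filter Topology
open scoped ENNReal

noncomputable section

namespace OverloadedFIFO

/-- The complement `G(x) = Γ((x, ∞))` of the cumulative distribution function of `Γ`. -/
def Gk (Γ : MeasureTheory.Measure ℝ) (x : ℝ) : ℝ := (Γ (Set.Ioi x)).toReal

/-- Model data: `K` job classes with arrival rates `lam`, service rates `mu`, and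
deadline (patience) distributions `Γ`, in the overloaded regime `ρ > 1`.  Each `Γ k` is a
Borel probability measure on `[0,∞)` (no mass on negatives), with continuous c.d.f.
(no atoms, in particular `Γ k {0} = 0`) and finite mean. -/
structure Data (K : ℕ) where
  lam : Fin K → ℝ
  mu : Fin K → ℝ
  Γ : Fin K → MeasureTheory.Measure ℝ
  lam_pos : ∀ k, 0 < lam k
  mu_pos : ∀ k, 0 < mu k
  Γ_prob : ∀ k, MeasureTheory.IsProbabilityMeasure (Γ k)
  Γ_null_neg : ∀ k, Γ k (Set.Iio 0) = 0
  Γ_noAtom : ∀ k, ∀ x : ℝ, Γ k {x} = 0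
  Γ_finite_mean : ∀ k, MeasureTheory.Integrable id (Γ k)
  rho_gt_one : 1 < ∑ k, lam k / mu k

instance {K : ℕ} (D : Data K) (k : Fin K) : IsProbabilityMeasure (D.Γ k) := D.Γ_prob k

/-- `ρ_k = λ_k / μ_k`. -/
def Data.rho {K : ℕ} (D : Data K) (k : Fin K) : ℝ := D.lam k / D.mu k

/-- `ρ = Σ_k ρ_k`. -/
def Data.rhoTot {K : ℕ} (D : Data K) : ℝ := ∑ k, D.rho k

/-- A workload fluid model solution: a nonnegative function `w` on `[0,∞)` satisfying
`w(t) = w(0) + Σ_k ρ_k ∫_0^t G_k(w(s)) ds − t` for all `t ≥ 0`. -/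
def IsWorkloadSol {K : ℕ} (D : Data K) (w : ℝ → ℝ) : Prop :=
  (∀ t : ℝ, 0 ≤ t → 0 ≤ w t) ∧
  (∀ k : Fin K, ∀ t : ℝ, 0 ≤ t →
    IntervalIntegrable (fun s => Gk (D.Γ k) (w s)) volume 0 t) ∧
  (∀ t : ℝ, 0 ≤ t →
    w t = w 0 + (∑ k, D.rho k * ∫ s in (0:ℝ)..t, Gk (D.Γ k) (w s)) - t)

/-- `w_l = sup {u ≥ 0 : Σ_k ρ_k G_k(u) > 1}`. -/
def wl {K : ℕ} (D : Data K) : ℝ :=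
  sSup {u : ℝ | 0 ≤ u ∧ 1 < ∑ k, D.rho k * Gk (D.Γ k) u}

/-- `w_u = sup {u ≥ 0 : Σ_k ρ_k G_k(u) ≥ 1}`. -/
def wu {K : ℕ} (D : Data K) : ℝ :=
  sSup {u : ℝ | 0 ≤ u ∧ 1 ≤ ∑ k, D.rho k * Gk (D.Γ k) u}

/-- `d_max = max_k sup {x ≥ 0 : G_k(x) > 0} ∈ (0,∞]`, as an extended nonnegative real. -/
def dmax {K : ℕ} (D : Data K) : ℝ≥0∞ :=
  ⨆ k, sSup (ENNReal.ofReal '' {x : ℝ | 0 ≤ x ∧ 0 < Gk (D.Γ k) x})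

/-- `τ(t) = inf {s ∈ [0,t] : w(s) + s ≥ t}`. -/
def tauF (w : ℝ → ℝ) (t : ℝ) : ℝ := sInf {s : ℝ | 0 ≤ s ∧ s ≤ t ∧ t ≤ w s + s}

/-- The nonnegative quadrant `[0,∞)²`. -/
def Q : Set (ℝ × ℝ) := {p | 0 ≤ p.1 ∧ 0 ≤ p.2}

/-- The shift `B_x = {y ∈ [0,∞)² : y − x ∈ B}` of a set `B ⊆ [0,∞)²`. -/
def shift (B : Set (ℝ × ℝ)) (x : ℝ × ℝ) : Set (ℝ × ℝ) :=
  {y | y ∈ Q ∧ (y.1 - x.1, y.2 - x.2) ∈ B}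

/-- Diagonal shift `B_t = B_{(t,t)}`. -/
def shiftd (B : Set (ℝ × ℝ)) (t : ℝ) : Set (ℝ × ℝ) := shift B (t, t)

/-- The set `C = ([0,∞)×{0}) ∪ ({0}×[0,∞))`. -/
def Cset : Set (ℝ × ℝ) := {p | (0 ≤ p.1 ∧ p.2 = 0) ∨ (p.1 = 0 ∧ 0 ≤ p.2)}

/-- The `κ`-enlargement `B^κ = {x ∈ [0,∞)² : inf_{y ∈ B} ‖x−y‖ < κ}` (Euclidean norm). -/
def enlarge (B : Set (ℝ × ℝ)) (κ : ℝ) : Set (ℝ × ℝ) :=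
  {x | x ∈ Q ∧ ∃ y ∈ B, Real.sqrt ((x.1 - y.1) ^ 2 + (x.2 - y.2) ^ 2) < κ}

/-- `w_ϑ = sup {x ≥ 0 : ϑ_+([x,∞)×[0,∞)) > 0}` for a `K`-tuple `ϑ` of measures on `[0,∞)²`. -/
def wMeas {K : ℕ} (ϑ : Fin K → MeasureTheory.Measure (ℝ × ℝ)) : ℝ :=
  sSup {x : ℝ | 0 ≤ x ∧ 0 < ∑ k, ϑ k (Set.Ici x ×ˢ Set.Ici (0:ℝ))}

/-- Membership in the set `I` of admissible initial measures: each `ϑ k` is a finite Borel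
measure on `[0,∞)²`; (I.1) the superposition charges no corner set `C_x`, `x ∈ [0,∞)²`;
(I.2) `w_ϑ < ∞`; (I.3) `max_k G_k(w_ϑ − ε) > 0` for every `ε > 0`. -/
def MemI {K : ℕ} (D : Data K) (ϑ : Fin K → MeasureTheory.Measure (ℝ × ℝ)) : Prop :=
  (∀ k, IsFiniteMeasure (ϑ k)) ∧
  (∀ k, ϑ k Qᶜ = 0) ∧
  (∀ x ∈ Q, (∑ k, ϑ k (shift Cset x)) = 0) ∧
  BddAbove {x : ℝ | 0 ≤ x ∧ 0 < ∑ k, ϑ k (Set.Ici x ×ˢ Set.Ici (0:ℝ))} ∧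
  (∀ ε : ℝ, 0 < ε → ∃ k, 0 < Gk (D.Γ k) (wMeas ϑ - ε))

/-- `δ⁺_w`: the Dirac measure at `w` if `w > 0`, and the zero measure otherwise. -/
def deltaPlus (w : ℝ) : MeasureTheory.Measure ℝ :=
  if 0 < w then MeasureTheory.Measure.dirac w else 0

instance (w : ℝ) : SFinite (deltaPlus w) := by
  unfold deltaPlus; split_ifs <;> infer_instance

/-- `(δ⁺_w × Γ)(B)`, as a real number. -/
def kern (Γ : MeasureTheory.Measure ℝ) (w : ℝ) (B : Set (ℝ × ℝ)) : ℝ :=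
  (((deltaPlus w).prod Γ) B).toReal

/-- A (measure-valued) fluid model solution with initial measure `ϑ`: a family
`ζ(t) = (ζ_1(t),…,ζ_K(t))` of finite Borel measures on `[0,∞)²` with `ζ(0) = ϑ` satisfying
`ζ_k(t)(B) = ϑ_k(B_t) + λ_k ∫_0^t (δ⁺_{w(s)} × Γ_k)(B_{t−s}) ds` for every Borel
`B ⊆ [0,∞)²` and `t ≥ 0`, where `w` is the (unique) workload fluid model solution with
`w(0) = w_ϑ`. -/
def IsFluidSol {K : ℕ} (D : Data K) (ϑ : Fin K → MeasureTheory.Measure (ℝ × ℝ))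
    (ζ : ℝ → Fin K → MeasureTheory.Measure (ℝ × ℝ)) : Prop :=
  ∃ w : ℝ → ℝ, IsWorkloadSol D w ∧ w 0 = wMeas ϑ ∧
    (∀ t : ℝ, 0 ≤ t → ∀ k, IsFiniteMeasure (ζ t k) ∧ ζ t k Qᶜ = 0) ∧
    (∀ k, ζ 0 k = ϑ k) ∧
    (∀ k, ∀ B : Set (ℝ × ℝ), B ⊆ Q → MeasurableSet B → ∀ t : ℝ, 0 ≤ t →
      IntervalIntegrable (fun s => kern (D.Γ k) (w s) (shiftd B (t - s))) volume 0 t ∧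
      ζ t k B = ϑ k (shiftd B t) +
        ENNReal.ofReal (D.lam k * ∫ s in (0:ℝ)..t, kern (D.Γ k) (w s) (shiftd B (t - s))))

/-- The candidate invariant state `θ^w`:
`θ^w_k(B) = λ_k ∫_0^w Γ_k({p ≥ u : (w−u, p−u) ∈ B}) du`. -/
def thetaW {K : ℕ} (D : Data K) (w : ℝ) (k : Fin K) : MeasureTheory.Measure (ℝ × ℝ) :=
  ENNReal.ofReal (D.lam k) •
    MeasureTheory.Measure.map (fun up : ℝ × ℝ => (w - up.1, up.2 - up.1))
      ((((MeasureTheory.volume.restrict (Set.Ioo (0:ℝ) w))).prod (D.Γ k)).restrict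
        {up : ℝ × ℝ | up.1 ≤ up.2})


/-! ### Auxiliary lemmas -/

lemma isClosed_Q : IsClosed Q :=
  (isClosed_le continuous_const continuous_fst).inter (isClosed_le continuous_const continuous_snd)

lemma measurableSet_Q : MeasurableSet Q := isClosed_Q.measurableSet

lemma measure_inter_Q {μ : Measure (ℝ × ℝ)} (h0 : μ Qᶜ = 0) (A : Set (ℝ × ℝ)) :
    μ A = μ (A ∩ Q) := by
  have h1 : μ (A ∩ Q) + μ (A \ Q) = μ A := measure_inter_add_diff A measurableSet_Q
  have h2 : μ (A \ Q) = 0 := measure_mono_null (diff_subset_compl A Q) h0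
  rw [← h1, h2, add_zero]

lemma continuousAt_indicatorQ {f : ℝ × ℝ → ℝ} (hf : Continuous f) {x : ℝ × ℝ}
    (h1 : x.1 ≠ 0) (h2 : x.2 ≠ 0) : ContinuousAt (Q.indicator f) x := by
  rcases lt_or_gt_of_ne h1 with h1' | h1'
  · have hU : Q.indicator f =ᶠ[𝓝 x] (fun _ => (0:ℝ)) := by
      filter_upwards [(isOpen_lt continuous_fst continuous_const).mem_nhds
        (show x ∈ {y : ℝ × ℝ | y.1 < 0} from h1')] with y hy
      exact indicator_of_notMem (fun hyQ => absurd hyQ.1 (not_le.2 hy)) f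
    exact continuousAt_const.congr hU.symm
  · rcases lt_or_gt_of_ne h2 with h2' | h2'
    · have hU : Q.indicator f =ᶠ[𝓝 x] (fun _ => (0:ℝ)) := by
        filter_upwards [(isOpen_lt continuous_snd continuous_const).mem_nhds
          (show x ∈ {y : ℝ × ℝ | y.2 < 0} from h2')] with y hy
        exact indicator_of_notMem (fun hyQ => absurd hyQ.2 (not_le.2 hy)) f
      exact continuousAt_const.congr hU.symm
    · have hU : Q.indicator f =ᶠ[𝓝 x] f := by
        filter_upwards [((isOpen_lt continuous_const continuous_fst).inter
          (isOpen_lt continuous_const continuous_snd)).mem_nhds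
          (show x ∈ {y : ℝ × ℝ | 0 < y.1} ∩ {y : ℝ × ℝ | 0 < y.2} from
            Set.mem_inter h1' h2')] with y hy
        exact indicator_of_mem (show y ∈ Q from ⟨le_of_lt hy.1, le_of_lt hy.2⟩) f
      exact hf.continuousAt.congr hU.symm

lemma Gk_nonneg (Γ : Measure ℝ) (x : ℝ) : 0 ≤ Gk Γ x := ENNReal.toReal_nonneg

/-- Continuity of the primitive `t ↦ ∫_0^t g`. -/
lemma continuousOn_prim {g : ℝ → ℝ}
    (hint : ∀ t : ℝ, 0 ≤ t → IntervalIntegrable g volume 0 t) :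
    ContinuousOn (fun t => ∫ s in (0:ℝ)..t, g s) (Ici 0) := by
  intro t₀ ht₀
  have hT : (0:ℝ) ≤ t₀ + 1 := by linarith [mem_Ici.mp ht₀]
  have hInt : IntegrableOn g (Icc 0 (t₀ + 1)) volume := by
    rw [integrableOn_Icc_iff_integrableOn_Ioc]
    exact (intervalIntegrable_iff_integrableOn_Ioc_of_le hT).mp (hint _ hT)
  have hc : ContinuousOn (fun x => ∫ s in Ioc 0 x, g s) (Icc 0 (t₀ + 1)) :=
    intervalIntegral.continuousOn_primitive hInt
  have hc2 : ContinuousOn (fun t => ∫ s in (0:ℝ)..t, g s) (Icc 0 (t₀ + 1)) := by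
    apply hc.congr
    intro x hx
    exact intervalIntegral.integral_of_le hx.1
  have h3 := hc2 t₀ ⟨mem_Ici.mp ht₀, by linarith⟩
  have h4 : 𝓝[Ici (0:ℝ)] t₀ = 𝓝[Icc (0:ℝ) (t₀+1)] t₀ := by
    rw [← Ici_inter_Iic]
    exact nhdsWithin_restrict' _ (Iic_mem_nhds (by linarith))
  rw [ContinuousWithinAt, h4]
  exact h3

/-- `w` is continuous on `[0,∞)`. -/
lemma w_contOn {K : ℕ} (D : Data K) (w : ℝ → ℝ) (hw : IsWorkloadSol D w) :
    ContinuousOn w (Ici 0) := by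
  obtain ⟨hpos, hint, heq⟩ := hw
  have h1 : ContinuousOn
      (fun t => w 0 + (∑ k, D.rho k * ∫ s in (0:ℝ)..t, Gk (D.Γ k) (w s)) - t) (Ici 0) := by
    apply ContinuousOn.sub _ continuousOn_id
    apply ContinuousOn.add continuousOn_const
    apply continuousOn_finset_sum
    intro k _
    exact (continuousOn_prim (hint k)).const_smul (D.rho k)
  exact ContinuousOn.congr h1 fun t ht => heq t (mem_Ici.mp ht)

lemma h_diff {K : ℕ} (D : Data K) (w : ℝ → ℝ) (hw : IsWorkloadSol D w) {a b : ℝ}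
    (ha : 0 ≤ a) (hab : a ≤ b) :
    w b + b - (w a + a) = ∑ k, D.rho k * ∫ s in a..b, Gk (D.Γ k) (w s) := by
  obtain ⟨hpos, hint, heq⟩ := hw
  have hb : (0:ℝ) ≤ b := le_trans ha hab
  rw [heq b hb, heq a ha]
  have : ∀ k : Fin K,
      D.rho k * ∫ s in a..b, Gk (D.Γ k) (w s) =
      D.rho k * ((∫ s in (0:ℝ)..b, Gk (D.Γ k) (w s)) - ∫ s in (0:ℝ)..a, Gk (D.Γ k) (w s)) := by
    intro k
    rw [intervalIntegral.integral_interval_sub_left (hint k b hb) (hint k a ha)]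
  rw [Finset.sum_congr rfl fun k _ => this k]
  simp only [mul_sub, Finset.sum_sub_distrib]
  ring

lemma rho_pos {K : ℕ} (D : Data K) (k : Fin K) : 0 < D.rho k :=
  div_pos (D.lam_pos k) (D.mu_pos k)

lemma bad_subsingleton {K : ℕ} (D : Data K) (w : ℝ → ℝ) (hw : IsWorkloadSol D w)
    (k : Fin K) (t₀ : ℝ) :
    Set.Subsingleton {s : ℝ | s ∈ Ioo 0 t₀ ∧ w s + s = t₀ ∧ 0 < D.Γ k (Ici (w s))} := by
  set S := {s : ℝ | s ∈ Ioo 0 t₀ ∧ w s + s = t₀ ∧ 0 < D.Γ k (Ici (w s))} with hS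
  have key : ∀ a b : ℝ, a ∈ S → b ∈ S → a < b → False := by
    intro a b ha hb hab
    obtain ⟨⟨ha0, hat⟩, haw, haΓ⟩ := ha
    obtain ⟨⟨hb0, hbt⟩, hbw, _⟩ := hb
    have hsum : (0:ℝ) = ∑ j, D.rho j * ∫ s in a..b, Gk (D.Γ j) (w s) := by
      have := h_diff D w hw (le_of_lt ha0) (le_of_lt hab)
      rw [haw, hbw] at this; linarith
    have hnn : ∀ j : Fin K, j ∈ Finset.univ →
        0 ≤ D.rho j * ∫ s in a..b, Gk (D.Γ j) (w s) := by
      intro j _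
      exact mul_nonneg (le_of_lt (rho_pos D j))
        (intervalIntegral.integral_nonneg (le_of_lt hab) fun s _ => Gk_nonneg _ _)
    have hzero : D.rho k * ∫ s in a..b, Gk (D.Γ k) (w s) = 0 :=
      (Finset.sum_eq_zero_iff_of_nonneg hnn).mp hsum.symm k (Finset.mem_univ k)
    have hIzero : ∫ s in a..b, Gk (D.Γ k) (w s) = 0 := by
      rcases mul_eq_zero.mp hzero with h | h
      · exact absurd h (ne_of_gt (rho_pos D k))
      · exact h
    -- integrability on a..b
    have hII : IntervalIntegrable (fun s => Gk (D.Γ k) (w s)) volume a b := by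
      apply (hw.2.1 k b (le_of_lt (lt_trans ha0 hab))).mono_set
      rw [uIcc_of_le (le_of_lt hab), uIcc_of_le (le_of_lt (lt_trans ha0 hab))]
      exact Icc_subset_Icc (le_of_lt ha0) le_rfl
    have hIOc : ∫ s in Ioc a b, Gk (D.Γ k) (w s) = 0 := by
      rw [← intervalIntegral.integral_of_le (le_of_lt hab)]; exact hIzero
    have hae : (fun s => Gk (D.Γ k) (w s)) =ᵐ[volume.restrict (Ioc a b)] 0 := by
      rw [← MeasureTheory.integral_eq_zero_iff_of_nonneg_ae
        (Filter.Eventually.of_forall fun s => Gk_nonneg _ _)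
        ((intervalIntegrable_iff_integrableOn_Ioc_of_le (le_of_lt hab)).mp hII)]
      exact hIOc
    have hae2 : ∀ᵐ u ∂volume, u ∈ Ioc a b → Gk (D.Γ k) (w u) = 0 :=
      (ae_restrict_iff' measurableSet_Ioc).mp hae
    -- find a point where Gk vanishes
    have hex : ∃ u ∈ Ioc a b, Gk (D.Γ k) (w u) = 0 := by
      by_contra hcon
      push_neg at hcon
      have hsub : Ioc a b ⊆ {u : ℝ | ¬(u ∈ Ioc a b → Gk (D.Γ k) (w u) = 0)} := by
        intro u hu
        simp only [mem_setOf_eq, _root_.not_imp]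
        exact ⟨hu, hcon u hu⟩
      have h0 : volume (Ioc a b) = 0 :=
        measure_mono_null hsub (ae_iff.mp hae2)
      rw [Real.volume_Ioc] at h0
      exact absurd h0 (ne_of_gt (by rw [ENNReal.ofReal_pos]; linarith))
    obtain ⟨u, hu, hGu⟩ := hex
    -- w u + u = t₀
    have hu0 : 0 < u := lt_trans ha0 hu.1
    have h1 : 0 ≤ w u + u - (w a + a) := by
      rw [h_diff D w hw (le_of_lt ha0) (le_of_lt hu.1)]
      exact Finset.sum_nonneg fun j _ => mul_nonneg (le_of_lt (rho_pos D j))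
        (intervalIntegral.integral_nonneg (le_of_lt hu.1) fun s _ => Gk_nonneg _ _)
    have h2 : 0 ≤ w b + b - (w u + u) := by
      rw [h_diff D w hw (le_of_lt hu0) hu.2]
      exact Finset.sum_nonneg fun j _ => mul_nonneg (le_of_lt (rho_pos D j))
        (intervalIntegral.integral_nonneg hu.2 fun s _ => Gk_nonneg _ _)
    have huw : w u + u = t₀ := by rw [haw] at h1; rw [hbw] at h2; linarith
    -- conclude
    have hΓu : D.Γ k (Ioi (w u)) = 0 := by
      have := (ENNReal.toReal_eq_zero_iff _).mp hGu
      rcases this with h | h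
      · exact h
      · exact absurd h (measure_ne_top _ _)
    have hsub2 : Ici (w a) ⊆ Ioi (w u) := by
      intro x hx
      have : w u < w a := by
        have : w u = t₀ - u := by linarith
        have h2 : w a = t₀ - a := by linarith
        rw [this, h2]; linarith [hu.1]
      exact lt_of_lt_of_le this hx
    exact absurd (measure_mono_null (by
      intro x hx
      exact hsub2 hx) hΓu) (ne_of_gt haΓ)
  intro s₁ h₁ s₂ h₂
  by_contra hne
  rcases lt_or_gt_of_ne hne with h | h
  · exact key s₁ s₂ h₁ h₂ h
  · exact key s₂ s₁ h₂ h₁ h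

instance (w : ℝ) : IsFiniteMeasure (deltaPlus w) := by
  unfold deltaPlus; split_ifs <;> infer_instance

lemma measurableSet_shiftd {B : Set (ℝ × ℝ)} (hB : MeasurableSet B) (u : ℝ) :
    MeasurableSet (shiftd B u) := by
  have h : shiftd B u = Q ∩ (fun y : ℝ × ℝ => (y.1 - u, y.2 - u)) ⁻¹' B := by
    ext y; exact Iff.rfl
  rw [h]
  exact measurableSet_Q.inter (hB.preimage (by fun_prop))

lemma rep_measure' {K : ℕ} (D : Data K) (k : Fin K) (w w' : ℝ → ℝ)
    (hw'c : Continuous w') (hw'eq : ∀ s, 0 ≤ s → w' s = w s)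
    (ϑk : Measure (ℝ × ℝ)) (ζtk : Measure (ℝ × ℝ)) (t : ℝ) (ht : 0 ≤ t)
    (hQ0 : ζtk Qᶜ = 0)
    (hform : ∀ B : Set (ℝ × ℝ), B ⊆ Q → MeasurableSet B →
      IntervalIntegrable (fun s => kern (D.Γ k) (w s) (shiftd B (t - s))) volume 0 t ∧
      ζtk B = ϑk (shiftd B t) +
        ENNReal.ofReal (D.lam k * ∫ s in (0:ℝ)..t, kern (D.Γ k) (w s) (shiftd B (t - s)))) :
    ζtk = (Measure.map (fun y : ℝ × ℝ => (y.1 - t, y.2 - t)) ϑk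
      + ENNReal.ofReal (D.lam k) •
        Measure.map (fun z : ℝ × ℝ => (w' z.1 - (t - z.1), z.2 - (t - z.1)))
          ((volume.restrict ({s | 0 < w' s} ∩ Ioo 0 t)).prod (D.Γ k))).restrict Q := by
  have hTmeas : Measurable (fun y : ℝ × ℝ => (y.1 - t, y.2 - t)) := by fun_prop
  have hΨc : Continuous (fun z : ℝ × ℝ => (w' z.1 - (t - z.1), z.2 - (t - z.1))) := by
    apply Continuous.prodMk
    · exact (hw'c.comp continuous_fst).sub (continuous_const.sub continuous_fst)
    · exact continuous_snd.sub (continuous_const.sub continuous_fst)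
  have hUmeas : MeasurableSet {s : ℝ | 0 < w' s} :=
    (isOpen_lt continuous_const hw'c).measurableSet
  ext A hA
  rw [Measure.restrict_apply hA]
  rw [measure_inter_Q hQ0 A]
  set B := A ∩ Q with hBdef
  have hBQ : B ⊆ Q := inter_subset_right
  have hBm : MeasurableSet B := hA.inter measurableSet_Q
  obtain ⟨hII, hval⟩ := hform B hBQ hBm
  rw [hval, Measure.add_apply, Measure.smul_apply, smul_eq_mul]
  congr 1
  · -- translation part
    rw [Measure.map_apply hTmeas hBm]
    congr 1
    ext y
    constructor
    · intro hy; exact hy.2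
    · intro hy
      refine ⟨?_, hy⟩
      have h2 := (hBQ hy : ((y.1 - t, y.2 - t) ∈ Q))
      have h21 : 0 ≤ y.1 - t := h2.1
      have h22 : 0 ≤ y.2 - t := h2.2
      exact ⟨by linarith, by linarith⟩
  · -- arrival part
    have hlam : (0:ℝ) ≤ D.lam k := le_of_lt (D.lam_pos k)
    have hker_nonneg : ∀ s, 0 ≤ kern (D.Γ k) (w s) (shiftd B (t - s)) :=
      fun s => ENNReal.toReal_nonneg
    have hint_nonneg : 0 ≤ ∫ s in (0:ℝ)..t, kern (D.Γ k) (w s) (shiftd B (t - s)) :=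
      intervalIntegral.integral_nonneg ht fun s _ => hker_nonneg s
    rw [ENNReal.ofReal_mul hlam]
    congr 1
    -- now: ofReal (∫ kern) = map Ψ (...) B
    rw [intervalIntegral.integral_of_le ht]
    rw [MeasureTheory.ofReal_integral_eq_lintegral_ofReal
      ((intervalIntegrable_iff_integrableOn_Ioc_of_le ht).mp hII)
      (Filter.Eventually.of_forall fun s => hker_nonneg s)]
    have hstep3 : ∀ s : ℝ, ENNReal.ofReal (kern (D.Γ k) (w s) (shiftd B (t - s)))
        = ((deltaPlus (w s)).prod (D.Γ k)) (shiftd B (t - s)) := by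
      intro s
      exact ENNReal.ofReal_toReal (measure_ne_top _ _)
    rw [lintegral_congr fun s => hstep3 s]
    -- move Ioc to Ioo
    rw [Measure.restrict_congr_set (MeasureTheory.Ioo_ae_eq_Ioc (a := (0:ℝ)) (b := t)).symm]
    -- compute map of product measure
    rw [Measure.map_apply hΨc.measurable hBm]
    rw [Measure.prod_apply (hΨc.measurable hBm)]
    rw [← Measure.restrict_restrict hUmeas]
    rw [← lintegral_indicator hUmeas]
    apply setLIntegral_congr_fun_ae measurableSet_Ioo
    apply Filter.Eventually.of_forall
    intro s hs
    have hws : w' s = w s := hw'eq s (le_of_lt hs.1)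
    by_cases hpos : 0 < w' s
    · rw [Set.indicator_of_mem (show s ∈ {u : ℝ | 0 < w' u} from hpos)]
      have hd : deltaPlus (w s) = Measure.dirac (w s) := if_pos (hws ▸ hpos)
      rw [hd, Measure.dirac_prod, Measure.map_apply measurable_prodMk_left
        (measurableSet_shiftd hBm (t - s))]
      congr 1
      ext p
      simp only [mem_preimage, Set.mem_setOf_eq]
      constructor
      · intro hp
        rw [hws]
        exact hp.2
      · intro hp
        rw [hws] at hp
        have hQ' := hBQ hp
        have hq1 : 0 ≤ w s - (t - s) := hQ'.1
        have hq2 : 0 ≤ p - (t - s) := hQ'.2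
        refine ⟨show (0:ℝ) ≤ w s ∧ (0:ℝ) ≤ p from ⟨by linarith [hs.2], by linarith [hs.2]⟩, ?_⟩
        exact hp
    · rw [Set.indicator_of_notMem (show s ∉ {u : ℝ | 0 < w' u} from hpos)]
      have hd : deltaPlus (w s) = 0 := if_neg (hws ▸ hpos)
      rw [hd, Measure.zero_prod]
      rfl

lemma integral_rep {K : ℕ} (D : Data K) (k : Fin K) (w' : ℝ → ℝ)
    (hw'c : Continuous w') (ϑk : Measure (ℝ × ℝ)) [IsFiniteMeasure ϑk]
    (ζtk : Measure (ℝ × ℝ)) (t : ℝ) (ht : 0 ≤ t)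
    (hrep : ζtk = (Measure.map (fun y : ℝ × ℝ => (y.1 - t, y.2 - t)) ϑk
      + ENNReal.ofReal (D.lam k) •
        Measure.map (fun z : ℝ × ℝ => (w' z.1 - (t - z.1), z.2 - (t - z.1)))
          ((volume.restrict ({s | 0 < w' s} ∩ Ioo 0 t)).prod (D.Γ k))).restrict Q)
    (f : BoundedContinuousFunction (ℝ × ℝ) ℝ) :
    ∫ x, f x ∂ζtk =
      (∫ y, Q.indicator f (y.1 - t, y.2 - t) ∂ϑk) +
      D.lam k * ∫ z : ℝ × ℝ,
        ((({s | 0 < w' s} ∩ Ioo 0 t) ×ˢ (univ : Set ℝ)).indicator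
          (fun z : ℝ × ℝ => Q.indicator f (w' z.1 - (t - z.1), z.2 - (t - z.1)))) z
        ∂(volume.prod (D.Γ k)) := by
  have hTmeas : Measurable (fun y : ℝ × ℝ => (y.1 - t, y.2 - t)) := by fun_prop
  have hΨc : Continuous (fun z : ℝ × ℝ => (w' z.1 - (t - z.1), z.2 - (t - z.1))) := by
    apply Continuous.prodMk
    · exact (hw'c.comp continuous_fst).sub (continuous_const.sub continuous_fst)
    · exact continuous_snd.sub (continuous_const.sub continuous_fst)
  have hUmeas : MeasurableSet ({s : ℝ | 0 < w' s} ∩ Ioo 0 t) :=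
    ((isOpen_lt continuous_const hw'c).measurableSet).inter measurableSet_Ioo
  set μ₁ := Measure.map (fun y : ℝ × ℝ => (y.1 - t, y.2 - t)) ϑk with hμ₁
  set μ₂ := Measure.map (fun z : ℝ × ℝ => (w' z.1 - (t - z.1), z.2 - (t - z.1)))
      ((volume.restrict ({s | 0 < w' s} ∩ Ioo 0 t)).prod (D.Γ k)) with hμ₂
  have hfin1 : IsFiniteMeasure μ₁ := by
    constructor
    rw [hμ₁, Measure.map_apply hTmeas MeasurableSet.univ]
    exact measure_lt_top _ _
  have hfin2 : IsFiniteMeasure μ₂ := by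
    constructor
    rw [hμ₂, Measure.map_apply hΨc.measurable MeasurableSet.univ]
    calc ((volume.restrict ({s | 0 < w' s} ∩ Ioo 0 t)).prod (D.Γ k)) _
        ≤ ((volume.restrict ({s | 0 < w' s} ∩ Ioo 0 t)).prod (D.Γ k)) univ :=
          measure_mono (subset_univ _)
      _ = volume.restrict ({s | 0 < w' s} ∩ Ioo 0 t) univ * D.Γ k univ := by
          rw [← Measure.prod_prod, univ_prod_univ]
      _ ≤ volume (Ioo 0 t) * 1 := by
          rw [Measure.restrict_apply MeasurableSet.univ, univ_inter, measure_univ]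
          exact mul_le_mul' (measure_mono inter_subset_right) le_rfl
      _ < ⊤ := by
          rw [mul_one, Real.volume_Ioo]
          exact ENNReal.ofReal_lt_top
  haveI := hfin1; haveI := hfin2
  haveI : IsFiniteMeasure (μ₁.restrict Q) := inferInstance
  haveI : IsFiniteMeasure ((ENNReal.ofReal (D.lam k) • μ₂).restrict Q) := by
    constructor
    rw [Measure.restrict_apply MeasurableSet.univ, Measure.smul_apply, smul_eq_mul]
    exact ENNReal.mul_lt_top ENNReal.ofReal_lt_top (measure_lt_top _ _)
  rw [hrep, Measure.restrict_add,
    integral_add_measure (f.integrable _) (f.integrable _)]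
  congr 1
  · -- translation part
    rw [← integral_indicator measurableSet_Q]
    rw [hμ₁, integral_map hTmeas.aemeasurable]
    exact ((f.continuous.stronglyMeasurable.indicator
      measurableSet_Q).aestronglyMeasurable)
  · -- arrival part
    rw [Measure.restrict_smul, integral_smul_measure, ENNReal.toReal_ofReal
      (le_of_lt (D.lam_pos k)), smul_eq_mul]
    congr 1
    rw [← integral_indicator measurableSet_Q]
    rw [hμ₂, integral_map hΨc.measurable.aemeasurable
      ((f.continuous.stronglyMeasurable.indicator measurableSet_Q).aestronglyMeasurable)]
    have hprod : (volume.restrict ({s : ℝ | 0 < w' s} ∩ Ioo 0 t)).prod (D.Γ k)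
        = (volume.prod (D.Γ k)).restrict (({s : ℝ | 0 < w' s} ∩ Ioo 0 t) ×ˢ univ) := by
      conv_lhs => rw [← Measure.restrict_univ (μ := D.Γ k)]
      exact Measure.prod_restrict _ _
    rw [hprod, ← integral_indicator (hUmeas.prod MeasurableSet.univ)]

/-- Continuity (within `[0,∞)`) of the translated-initial-measure term. -/
lemma cont_term1 {K : ℕ} (D : Data K) (ϑ : Fin K → Measure (ℝ × ℝ)) (hϑ : MemI D ϑ)
    (k : Fin K) (f : BoundedContinuousFunction (ℝ × ℝ) ℝ) :
    ContinuousOn (fun t : ℝ => ∫ y : ℝ × ℝ, Q.indicator f (y.1 - t, y.2 - t) ∂(ϑ k))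
      (Ici 0) := by
  obtain ⟨hϑfin, hϑQ, hϑC, _, _⟩ := hϑ
  haveI : IsFiniteMeasure (ϑ k) := hϑfin k
  intro t₀ ht₀
  have ht₀' : (0:ℝ) ≤ t₀ := ht₀
  -- the two lines are null
  have hC1 : ϑ k {y : ℝ × ℝ | y.1 = t₀} = 0 := by
    have hmem : ((t₀, 0) : ℝ × ℝ) ∈ Q := ⟨ht₀', le_rfl⟩
    have hsum := hϑC (t₀, 0) hmem
    have hk : ϑ k (shift Cset (t₀, 0)) = 0 :=
      (Finset.sum_eq_zero_iff.mp hsum) k (Finset.mem_univ k)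
    rw [measure_inter_Q (hϑQ k)]
    refine measure_mono_null ?_ hk
    rintro y ⟨hy1, hyQ⟩
    exact ⟨hyQ, Or.inr ⟨sub_eq_zero.mpr hy1, by simpa using hyQ.2⟩⟩
  have hC2 : ϑ k {y : ℝ × ℝ | y.2 = t₀} = 0 := by
    have hmem : ((0, t₀) : ℝ × ℝ) ∈ Q := ⟨le_rfl, ht₀'⟩
    have hsum := hϑC (0, t₀) hmem
    have hk : ϑ k (shift Cset (0, t₀)) = 0 :=
      (Finset.sum_eq_zero_iff.mp hsum) k (Finset.mem_univ k)
    rw [measure_inter_Q (hϑQ k)]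
    refine measure_mono_null ?_ hk
    rintro y ⟨hy2, hyQ⟩
    exact ⟨hyQ, Or.inl ⟨by simpa using hyQ.1, sub_eq_zero.mpr hy2⟩⟩
  have hnull : ϑ k {y : ℝ × ℝ | y.1 = t₀ ∨ y.2 = t₀} = 0 := by
    have : {y : ℝ × ℝ | y.1 = t₀ ∨ y.2 = t₀} =
        {y : ℝ × ℝ | y.1 = t₀} ∪ {y : ℝ × ℝ | y.2 = t₀} := rfl
    rw [this]
    exact measure_union_null hC1 hC2
  -- dominated convergence
  apply tendsto_integral_filter_of_dominated_convergence (bound := fun _ => ‖f‖)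
  · apply Filter.Eventually.of_forall
    intro t
    exact ((f.continuous.stronglyMeasurable.indicator measurableSet_Q).comp_measurable
      (by fun_prop)).aestronglyMeasurable
  · apply Filter.Eventually.of_forall
    intro t
    apply ae_of_all
    intro y
    exact (norm_indicator_le_norm_self _ _).trans (f.norm_coe_le_norm _)
  · exact integrable_const _
  · have hae : ∀ᵐ y ∂(ϑ k), ¬(y.1 = t₀ ∨ y.2 = t₀) := by
      rw [ae_iff]
      refine measure_mono_null ?_ hnull
      intro y hy
      simp only [Set.mem_setOf_eq, not_not] at hy ⊢
      exact hy
    filter_upwards [hae] with y hy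
    push_neg at hy
    have hca : ContinuousAt (fun t : ℝ => Q.indicator f (y.1 - t, y.2 - t)) t₀ := by
      have hinner : ContinuousAt (fun t : ℝ => ((y.1 - t, y.2 - t) : ℝ × ℝ)) t₀ :=
        ((continuous_const.sub continuous_id).prodMk
          (continuous_const.sub continuous_id)).continuousAt
      exact ContinuousAt.comp
        (continuousAt_indicatorQ f.continuous (sub_ne_zero.mpr hy.1) (sub_ne_zero.mpr hy.2))
        hinner
    exact hca.tendsto.mono_left nhdsWithin_le_nhds

/-- Continuity (within `[0,∞)`) of the arrival term. -/
lemma cont_term2 {K : ℕ} (D : Data K) (k : Fin K) (w w' : ℝ → ℝ)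
    (hw : IsWorkloadSol D w) (hw'c : Continuous w') (hw'eq : ∀ s, 0 ≤ s → w' s = w s)
    (f : BoundedContinuousFunction (ℝ × ℝ) ℝ) :
    ContinuousOn (fun t : ℝ => ∫ z : ℝ × ℝ,
      ((({s : ℝ | 0 < w' s} ∩ Ioo 0 t) ×ˢ (univ : Set ℝ)).indicator
        (fun z : ℝ × ℝ => Q.indicator f (w' z.1 - (t - z.1), z.2 - (t - z.1)))) z
      ∂(volume.prod (D.Γ k))) (Ici 0) := by
  intro t₀ ht₀
  have ht₀' : (0:ℝ) ≤ t₀ := ht₀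
  set Γm := D.Γ k with hΓm
  set η := (volume : Measure ℝ).prod Γm with hη
  set G : ℝ → ℝ × ℝ → ℝ := fun t z =>
    ((({s : ℝ | 0 < w' s} ∩ Ioo 0 t) ×ˢ (univ : Set ℝ)).indicator
      (fun z : ℝ × ℝ => Q.indicator f (w' z.1 - (t - z.1), z.2 - (t - z.1)))) z with hG
  have hAmem : ∀ t : ℝ, ∀ z : ℝ × ℝ,
      z ∈ (({s : ℝ | 0 < w' s} ∩ Ioo 0 t) ×ˢ (univ : Set ℝ)) ↔
      (0 < w' z.1 ∧ 0 < z.1 ∧ z.1 < t) := by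
    intro t z
    simp [Set.mem_prod, Set.mem_inter_iff, Set.mem_Ioo, and_assoc]
  -- the four null sets
  have hN1 : η {z : ℝ × ℝ | z.1 = t₀} = 0 := by
    have h : {z : ℝ × ℝ | z.1 = t₀} = ({t₀} : Set ℝ) ×ˢ (univ : Set ℝ) := by
      ext z
      simp only [Set.mem_setOf_eq, Set.mem_prod, Set.mem_singleton_iff, Set.mem_univ, and_true]
    rw [h, hη, Measure.prod_prod, Real.volume_singleton, zero_mul]
  have hN2 : η {z : ℝ × ℝ | z.2 = t₀ - z.1} = 0 := by
    have hm : MeasurableSet {z : ℝ × ℝ | z.2 = t₀ - z.1} :=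
      (isClosed_eq continuous_snd (continuous_const.sub continuous_fst)).measurableSet
    rw [hη, Measure.prod_apply hm]
    have hsec : ∀ s : ℝ, Γm (Prod.mk s ⁻¹' {z : ℝ × ℝ | z.2 = t₀ - z.1}) = 0 := by
      intro s
      have h : Prod.mk s ⁻¹' {z : ℝ × ℝ | z.2 = t₀ - z.1} = {t₀ - s} := by
        ext p; simp [Set.mem_preimage]
      rw [h, hΓm]
      exact D.Γ_noAtom k _
    rw [lintegral_congr hsec]
    simp
  have hN3 : η ({s : ℝ | s ∈ Ioo 0 t₀ ∧ w s + s = t₀ ∧ 0 < D.Γ k (Ici (w s))} ×ˢ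
      (univ : Set ℝ)) = 0 := by
    set S := {s : ℝ | s ∈ Ioo 0 t₀ ∧ w s + s = t₀ ∧ 0 < D.Γ k (Ici (w s))} with hSdef
    rcases Set.eq_empty_or_nonempty S with hS | ⟨s₀, hs₀⟩
    · rw [hS]; simp
    · have hsub : S ⊆ {s₀} := fun u hu => (bad_subsingleton D w hw k t₀) hu hs₀
      refine measure_mono_null (Set.prod_mono hsub subset_rfl) ?_
      rw [hη, Measure.prod_prod, Real.volume_singleton, zero_mul]
  have hanti : Antitone (fun x : ℝ => Γm (Ici x)) :=
    fun a b hab => measure_mono (Ici_subset_Ici.mpr hab)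
  have hgmeas : Measurable (fun x : ℝ => Γm (Ici x)) := hanti.measurable
  have hN4 : η {z : ℝ × ℝ | z.1 ∈ Ioo 0 t₀ ∧ w' z.1 + z.1 = t₀ ∧
      Γm (Ici (w' z.1)) = 0 ∧ w' z.1 < z.2} = 0 := by
    have hm : MeasurableSet {z : ℝ × ℝ | z.1 ∈ Ioo 0 t₀ ∧ w' z.1 + z.1 = t₀ ∧
        Γm (Ici (w' z.1)) = 0 ∧ w' z.1 < z.2} := by
      apply MeasurableSet.inter
      · exact measurable_fst measurableSet_Ioo
      apply MeasurableSet.inter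
      · exact ((isClosed_eq ((hw'c.comp continuous_fst).add continuous_fst)
          continuous_const)).measurableSet
      apply MeasurableSet.inter
      · exact ((hgmeas.comp (hw'c.measurable.comp measurable_fst))
          (measurableSet_singleton 0))
      · exact (isOpen_lt (hw'c.comp continuous_fst) continuous_snd).measurableSet
    rw [hη, Measure.prod_apply hm]
    have hsec : ∀ s : ℝ, Γm (Prod.mk s ⁻¹' {z : ℝ × ℝ | z.1 ∈ Ioo 0 t₀ ∧
        w' z.1 + z.1 = t₀ ∧ Γm (Ici (w' z.1)) = 0 ∧ w' z.1 < z.2}) = 0 := by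
      intro s
      by_cases hcond : s ∈ Ioo 0 t₀ ∧ w' s + s = t₀ ∧ Γm (Ici (w' s)) = 0
      · refine measure_mono_null (fun p hp => ?_) hcond.2.2
        exact le_of_lt hp.2.2.2
      · have h : Prod.mk s ⁻¹' {z : ℝ × ℝ | z.1 ∈ Ioo 0 t₀ ∧ w' z.1 + z.1 = t₀ ∧
            Γm (Ici (w' z.1)) = 0 ∧ w' z.1 < z.2} = ∅ := by
          ext p
          simp only [Set.mem_preimage, Set.mem_setOf_eq, Set.mem_empty_iff_false, iff_false]
          intro hp
          exact hcond ⟨hp.1, hp.2.1, hp.2.2.1⟩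
        rw [h]; exact measure_empty
    rw [lintegral_congr hsec]
    simp
  suffices key : Filter.Tendsto (fun t => ∫ z : ℝ × ℝ, G t z ∂η) (𝓝[Ici 0] t₀)
      (𝓝 (∫ z : ℝ × ℝ, G t₀ z ∂η)) by exact key
  -- dominated convergence
  apply tendsto_integral_filter_of_dominated_convergence
    (bound := ((Ioc (0:ℝ) (t₀+1)) ×ˢ (univ : Set ℝ)).indicator (fun _ => ‖f‖))
  · apply Filter.Eventually.of_forall
    intro t
    have hΨm : Measurable (fun z : ℝ × ℝ => ((w' z.1 - (t - z.1), z.2 - (t - z.1)) : ℝ × ℝ)) := by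
      fun_prop
    have hUm : MeasurableSet (({s : ℝ | 0 < w' s} ∩ Ioo 0 t) ×ˢ (univ : Set ℝ)) :=
      (((isOpen_lt continuous_const hw'c).measurableSet).inter measurableSet_Ioo).prod
        MeasurableSet.univ
    simp only [hG]
    exact (((f.continuous.stronglyMeasurable.indicator measurableSet_Q).comp_measurable
      hΨm).indicator hUm).aestronglyMeasurable
  · filter_upwards [nhdsWithin_le_nhds (eventually_lt_nhds (lt_add_one t₀))] with t hlt
    apply ae_of_all
    intro z
    simp only [hG]
    by_cases hz : z ∈ (({s : ℝ | 0 < w' s} ∩ Ioo 0 t) ×ˢ (univ : Set ℝ))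
    · rw [Set.indicator_of_mem hz]
      have hz1 : z.1 ∈ Ioc (0:ℝ) (t₀+1) := by
        have h2 := ((hAmem t z).mp hz).2
        exact ⟨h2.1, le_of_lt (lt_of_lt_of_le h2.2 (le_of_lt hlt))⟩
      have hzmem : z ∈ (Ioc (0:ℝ) (t₀+1)) ×ˢ (univ : Set ℝ) := ⟨hz1, trivial⟩
      rw [Set.indicator_of_mem hzmem]
      exact (norm_indicator_le_norm_self _ _).trans (f.norm_coe_le_norm _)
    · rw [Set.indicator_of_notMem hz]
      simp only [norm_zero]
      exact Set.indicator_apply_nonneg (fun _ => norm_nonneg _)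
  · rw [MeasureTheory.integrable_indicator_iff (measurableSet_Ioc.prod MeasurableSet.univ)]
    refine integrableOn_const (ne_of_lt ?_)
    rw [hη, Measure.prod_prod, measure_univ, mul_one, Real.volume_Ioc]
    exact ENNReal.ofReal_lt_top
  · -- a.e. pointwise convergence
    have hae : ∀ᵐ z ∂η, z ∉ ({z : ℝ × ℝ | z.1 = t₀} ∪ {z : ℝ × ℝ | z.2 = t₀ - z.1} ∪
        ({s : ℝ | s ∈ Ioo 0 t₀ ∧ w s + s = t₀ ∧ 0 < D.Γ k (Ici (w s))} ×ˢ (univ : Set ℝ)) ∪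
        {z : ℝ × ℝ | z.1 ∈ Ioo 0 t₀ ∧ w' z.1 + z.1 = t₀ ∧
          Γm (Ici (w' z.1)) = 0 ∧ w' z.1 < z.2}) := by
      rw [← MeasureTheory.measure_eq_zero_iff_ae_notMem]
      exact measure_union_null (measure_union_null (measure_union_null hN1 hN2) hN3) hN4
    filter_upwards [hae] with z hz
    simp only [Set.mem_union, not_or] at hz
    obtain ⟨⟨⟨hz1, hz2⟩, hz3⟩, hz4⟩ := hz
    apply Filter.Tendsto.mono_left _ nhdsWithin_le_nhds
    by_cases ha : 0 < w' z.1 ∧ 0 < z.1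
    · rcases lt_trichotomy z.1 t₀ with hst | hst | hst
      · -- 0 < z.1 < t₀
        have hev : ∀ᶠ t in 𝓝 t₀, G t z =
            Q.indicator f (w' z.1 - (t - z.1), z.2 - (t - z.1)) := by
          filter_upwards [eventually_gt_nhds hst] with t hts
          simp only [hG]
          exact Set.indicator_of_mem ((hAmem t z).mpr ⟨ha.1, ha.2, hts⟩) _
        have hval : G t₀ z = Q.indicator f (w' z.1 - (t₀ - z.1), z.2 - (t₀ - z.1)) := by
          simp only [hG]
          exact Set.indicator_of_mem ((hAmem t₀ z).mpr ⟨ha.1, ha.2, hst⟩) _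
        by_cases hss : w' z.1 + z.1 = t₀
        · -- boundary case: everything vanishes near t₀
          have hws : w' z.1 = w z.1 := hw'eq z.1 (le_of_lt ha.2)
          have hss' : w z.1 + z.1 = t₀ := by rw [← hws]; exact hss
          have hΓ0 : Γm (Ici (w' z.1)) = 0 := by
            by_contra hne
            rw [hws] at hne
            exact hz3 ⟨show z.1 ∈ {s : ℝ | s ∈ Ioo 0 t₀ ∧ w s + s = t₀ ∧
                0 < D.Γ k (Ici (w s))} from
              ⟨⟨ha.2, hst⟩, hss', pos_iff_ne_zero.mpr hne⟩, trivial⟩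
          have hple : z.2 ≤ w' z.1 := by
            by_contra hlt
            push_neg at hlt
            exact hz4 (show z ∈ {z : ℝ × ℝ | z.1 ∈ Ioo 0 t₀ ∧ w' z.1 + z.1 = t₀ ∧
              Γm (Ici (w' z.1)) = 0 ∧ w' z.1 < z.2} from ⟨⟨ha.2, hst⟩, hss, hΓ0, hlt⟩)
          have hpne : z.2 ≠ t₀ - z.1 := hz2
          have hplt : z.2 < t₀ - z.1 := by
            rcases lt_or_eq_of_le hple with h | h
            · linarith
            · exact absurd (by linarith : z.2 = t₀ - z.1) hpne
          have hzero : ∀ t : ℝ, z.1 + z.2 < t → G t z = 0 := by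
            intro t hts
            simp only [hG]
            by_cases hmem : z ∈ (({u : ℝ | 0 < w' u} ∩ Ioo 0 t) ×ˢ (univ : Set ℝ))
            · rw [Set.indicator_of_mem hmem]
              apply Set.indicator_of_notMem
              intro hQmem
              have h2 : (0:ℝ) ≤ z.2 - (t - z.1) := hQmem.2
              linarith
            · exact Set.indicator_of_notMem hmem _
          have h0 : G t₀ z = 0 := hzero t₀ (by linarith)
          rw [h0]
          apply Filter.Tendsto.congr' _ tendsto_const_nhds
          filter_upwards [eventually_gt_nhds (show z.1 + z.2 < t₀ by linarith)] with t hts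
          exact (hzero t hts).symm
        · -- nondegenerate case
          have hx1 : w' z.1 - (t₀ - z.1) ≠ 0 := fun h => hss (by linarith)
          have hx2 : z.2 - (t₀ - z.1) ≠ 0 := by
            intro h
            exact hz2 (show z.2 = t₀ - z.1 by linarith)
          have hca : ContinuousAt
              (fun t : ℝ => Q.indicator f (w' z.1 - (t - z.1), z.2 - (t - z.1))) t₀ := by
            have hinner : ContinuousAt
                (fun t : ℝ => ((w' z.1 - (t - z.1), z.2 - (t - z.1)) : ℝ × ℝ)) t₀ :=
              ((continuous_const.sub (continuous_id.sub continuous_const)).prodMk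
                (continuous_const.sub (continuous_id.sub continuous_const))).continuousAt
            exact ContinuousAt.comp (continuousAt_indicatorQ f.continuous hx1 hx2) hinner
          rw [hval]
          exact hca.tendsto.congr' (hev.mono fun t h => h.symm)
      · exact absurd hst hz1
      · -- z.1 > t₀
        have hzero : ∀ t : ℝ, t < z.1 → G t z = 0 := by
          intro t hts
          simp only [hG]
          apply Set.indicator_of_notMem
          intro hmem
          exact absurd ((hAmem t z).mp hmem).2.2 (not_lt.mpr (le_of_lt hts))
        have h0 : G t₀ z = 0 := hzero t₀ hst
        rw [h0]
        apply Filter.Tendsto.congr' _ tendsto_const_nhds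
        filter_upwards [eventually_lt_nhds hst] with t hts
        exact (hzero t hts).symm
    · -- degenerate: G ≡ 0
      have hzero : ∀ t : ℝ, G t z = 0 := by
        intro t
        simp only [hG]
        apply Set.indicator_of_notMem
        intro hmem
        obtain ⟨h1, h2, _⟩ := (hAmem t z).mp hmem
        exact ha ⟨h1, h2⟩
      rw [hzero t₀]
      exact Filter.Tendsto.congr (fun t => (hzero t).symm) tendsto_const_nhds
/-- For `ϑ ∈ I` and the fluid model solution `ζ` with initial measure `ϑ`,
each `t ↦ ζ_k(t)` is continuous on `[0,∞)` in the topology of weak convergence, i.e.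
`t ↦ ∫ f dζ_k(t)` is continuous on `[0,∞)` for every bounded continuous `f`. -/
theorem fluid_weakly_continuous {K : ℕ} (D : Data K)
    (ϑ : Fin K → MeasureTheory.Measure (ℝ × ℝ)) (hϑ : MemI D ϑ)
    (ζ : ℝ → Fin K → MeasureTheory.Measure (ℝ × ℝ)) (hζ : IsFluidSol D ϑ ζ) :
    ∀ k, ∀ f : BoundedContinuousFunction (ℝ × ℝ) ℝ,
      ContinuousOn (fun t : ℝ => ∫ x, f x ∂(ζ t k)) (Set.Ici (0:ℝ)) := by
  obtain ⟨w, hw, hw0, hfin, hzero, hform⟩ := hζ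
  intro k f
  haveI : IsFiniteMeasure (ϑ k) := hϑ.1 k
  have hwcont : ContinuousOn w (Ici 0) := w_contOn D w hw
  set w' : ℝ → ℝ := fun s => w (max s 0) with hw'def
  have hw'c : Continuous w' :=
    hwcont.comp_continuous (continuous_id.max continuous_const) (fun x => mem_Ici.mpr (le_max_right _ _))
  have hw'eq : ∀ s, 0 ≤ s → w' s = w s := by
    intro s hs
    simp only [hw'def, max_eq_left hs]
  have hrepval : ∀ t : ℝ, 0 ≤ t → (∫ x, f x ∂(ζ t k)) =
      (∫ y : ℝ × ℝ, Q.indicator f (y.1 - t, y.2 - t) ∂(ϑ k)) +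
      D.lam k * ∫ z : ℝ × ℝ, ((({s : ℝ | 0 < w' s} ∩ Ioo 0 t) ×ˢ (univ : Set ℝ)).indicator
        (fun z : ℝ × ℝ => Q.indicator f (w' z.1 - (t - z.1), z.2 - (t - z.1)))) z
        ∂(volume.prod (D.Γ k)) := by
    intro t ht
    refine integral_rep D k w' hw'c (ϑ k) (ζ t k) t ht ?_ f
    refine rep_measure' D k w w' hw'c hw'eq (ϑ k) (ζ t k) t ht ((hfin t ht k).2) ?_
    intro B hBQ hBm
    exact hform k B hBQ hBm t ht
  have hc : ContinuousOn (fun t : ℝ =>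
      (∫ y : ℝ × ℝ, Q.indicator f (y.1 - t, y.2 - t) ∂(ϑ k)) +
      D.lam k * ∫ z : ℝ × ℝ, ((({s : ℝ | 0 < w' s} ∩ Ioo 0 t) ×ˢ (univ : Set ℝ)).indicator
        (fun z : ℝ × ℝ => Q.indicator f (w' z.1 - (t - z.1), z.2 - (t - z.1)))) z
        ∂(volume.prod (D.Γ k))) (Ici 0) :=
    (cont_term1 D ϑ hϑ k f).add
      (continuousOn_const.mul (cont_term2 D k w w' hw hw'c hw'eq f))
  exact hc.congr fun t ht => hrepval t ht


end OverloadedFIFO
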